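/- Let L : A* ⇀ B* be a partial function. The Kl(T)-automaton 𝒜_init defined by 𝒜_init(center) = A*, 𝒜_init(▷) : 1 ⇸ A* sending 0 to (ε, ε), 𝒜_init(a) : A* ⇸ A* sending w to (ε, wa) for each a ∈ A, and 𝒜_init(◁) : A* ⇸ 1 sending w to (L(w), 0) when L(w) is defined and to ⊥ otherwise, accepts L_Kl and is an initial object of Auto(L_Kl). -/

import Mathlib

open CategoryTheory CategoryTheory.Limits

universe v u

/-! ### The input category `I_A` of word automata -/

inductive WObj (A : Type) : Type where
  | left | center | right

inductive WEdge {A : Type} : WObj A → WObj A → Type where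
  | tri : WEdge WObj.left WObj.center
  | letter (a : A) : WEdge WObj.center WObj.center
  | tril : WEdge WObj.center WObj.right

instance (A : Type) : Quiver (WObj A) := ⟨WEdge⟩

/-- `I_A`: the free category on the graph `left -▷→ center -a→ center -◁→ right`. -/
def IA (A : Type) : Type := Paths (WObj A)

instance (A : Type) : Category (IA A) :=
  inferInstanceAs (Category (Paths (WObj A)))

def IA.l (A : Type) : IA A := WObj.left
def IA.c (A : Type) : IA A := WObj.center
def IA.r (A : Type) : IA A := WObj.right

/-- The generating morphism `▷ : left ⟶ center`. -/
def IA.tri (A : Type) : IA.l A ⟶ IA.c A := Quiver.Hom.toPath WEdge.tri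
/-- The generating morphism `a : center ⟶ center` for a letter `a`. -/
def IA.letter {A : Type} (a : A) : IA.c A ⟶ IA.c A := Quiver.Hom.toPath (WEdge.letter a)
/-- The generating morphism `◁ : center ⟶ right`. -/
def IA.tril (A : Type) : IA.c A ⟶ IA.r A := Quiver.Hom.toPath WEdge.tril

/-- The word spelled by a path in the graph (the sequence of `letter` edges used). -/
def toWord {A : Type} : ∀ {X Y : WObj A}, Quiver.Path X Y → List A
  | _, _, Quiver.Path.nil => []
  | _, _, Quiver.Path.cons p e =>
      toWord p ++ (match e with
        | WEdge.letter a => [a]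
        | _ => [])

/-- The path `center → center` spelling a word `w`. -/
def pathCC {A : Type} : List A → ((IA.c A) ⟶ (IA.c A))
  | [] => Quiver.Path.nil
  | a :: w => (Quiver.Hom.toPath (WEdge.letter a)).comp (pathCC w)

/-- The path `▷ w ◁ : left ⟶ right` spelling a word `w`. -/
def pathLR {A : Type} (w : List A) : (IA.l A) ⟶ (IA.r A) :=
  IA.tri A ≫ pathCC w ≫ IA.tril A

theorem path_from_right {A : Type} : ∀ {Z : WObj A},
    Quiver.Path (WObj.right : WObj A) Z → Z = WObj.right
  | _, Quiver.Path.nil => rfl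
  | _, Quiver.Path.cons p e => by
      have h := path_from_right p
      subst h
      exact nomatch e

theorem path_ll_nil {A : Type} (p : Quiver.Path (WObj.left : WObj A) WObj.left) :
    p = Quiver.Path.nil := by
  cases p with
  | nil => rfl
  | cons q e => exact nomatch e

theorem path_rr_nil {A : Type} (p : Quiver.Path (WObj.right : WObj A) WObj.right) :
    p = Quiver.Path.nil := by
  cases p with
  | nil => rfl
  | cons q e =>
      have h := path_from_right q
      subst h
      exact nomatch e

theorem path_rl_false {A : Type} (p : Quiver.Path (WObj.right : WObj A) WObj.left) :
    False := by
  have := path_from_right p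
  exact nomatch this

/-- `O_A`: the full subcategory of `I_A` on the objects `left` and `right`. -/
def OA (A : Type) : Type := ObjectProperty.FullSubcategory (fun X : IA A => X ≠ IA.c A)

instance (A : Type) : Category (OA A) :=
  inferInstanceAs (Category (ObjectProperty.FullSubcategory (fun X : IA A => X ≠ IA.c A)))

/-- The inclusion functor `ι : O_A ⥤ I_A`. -/
def OA.inc (A : Type) : OA A ⥤ IA A := ObjectProperty.ι _

def OA.l (A : Type) : OA A := ⟨IA.l A, fun h => nomatch (h : (WObj.left : WObj A) = WObj.center)⟩
def OA.r (A : Type) : OA A := ⟨IA.r A, fun h => nomatch (h : (WObj.right : WObj A) = WObj.center)⟩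

/-- The morphism `▷ w ◁ : left ⟶ right` of `O_A`. -/
def OA.word {A : Type} (w : List A) : OA.l A ⟶ OA.r A := ⟨pathLR w⟩

/-- The language `O_A ⥤ C` determined by two objects `LI`, `LO` of `C` and a function
assigning to every word `w ∈ A*` a morphism `LI ⟶ LO` (the value at `▷w◁`). -/
def mkLang {A : Type} {C : Type u} [Category.{v} C] (LI LO : C)
    (f : List A → (LI ⟶ LO)) : OA A ⥤ C where
  obj X :=
    match X with
    | ⟨WObj.left, _⟩ => LI
    | ⟨WObj.right, _⟩ => LO
    | ⟨WObj.center, h⟩ => absurd rfl h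
  map {X Y} p :=
    match X, Y, p with
    | ⟨WObj.left, _⟩, ⟨WObj.left, _⟩, _ => 𝟙 LI
    | ⟨WObj.left, _⟩, ⟨WObj.right, _⟩, p => f (toWord p.hom)
    | ⟨WObj.right, _⟩, ⟨WObj.right, _⟩, _ => 𝟙 LO
    | ⟨WObj.right, _⟩, ⟨WObj.left, _⟩, p => (path_rl_false p.hom).elim
    | ⟨WObj.center, h⟩, _, _ => absurd rfl h
    | _, ⟨WObj.center, h⟩, _ => absurd rfl h
  map_id X := by
    rcases X with ⟨(_|_|_), hX⟩
    · rfl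
    · exact absurd rfl hX
    · rfl
  map_comp {X Y Z} p q := by
    rcases X with ⟨(_|_|_), hX⟩ <;> rcases Y with ⟨(_|_|_), hY⟩ <;>
      rcases Z with ⟨(_|_|_), hZ⟩ <;>
      rcases p with ⟨p⟩ <;> rcases q with ⟨q⟩ <;>
      first
        | exact absurd rfl hX
        | exact absurd rfl hY
        | exact absurd rfl hZ
        | exact (path_rl_false p).elim
        | exact (path_rl_false q).elim
        | exact (Category.id_comp _).symm
        | (have hp := path_ll_nil p
           subst hp
           show f (toWord (Quiver.Path.comp Quiver.Path.nil q)) = 𝟙 LI ≫ f (toWord q)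
           erw [Quiver.Path.nil_comp, Category.id_comp])
        | (have hq := path_rr_nil q
           subst hq
           show f (toWord (Quiver.Path.comp p Quiver.Path.nil)) = f (toWord p) ≫ 𝟙 LO
           erw [Quiver.Path.comp_nil, Category.comp_id])

/-- A `C`-automaton `M` accepts the `C`-language `L` when `ι ⋙ M = L`. -/
def Accepts {A : Type} {C : Type u} [Category.{v} C] (M : IA A ⥤ C) (L : OA A ⥤ C) : Prop :=
  OA.inc A ⋙ M = L

/-- The category `Auto(L)` of `C`-automata accepting the language `L`; morphisms are
natural transformations whose whiskering along `ι` is the identity of `L`. -/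
def Auto (A : Type) {C : Type u} [Category.{v} C] (L : OA A ⥤ C) : Type _ :=
  { M : IA A ⥤ C // Accepts M L }

instance (A : Type) {C : Type u} [Category.{v} C] (L : OA A ⥤ C) :
    Category (Auto A L) where
  Hom M N := { α : M.1 ⟶ N.1 //
    CategoryTheory.Functor.whiskerLeft (OA.inc A) α = eqToHom (M.2.trans N.2.symm) }
  id M := ⟨𝟙 M.1, by simp⟩
  comp {M N P} f g := ⟨f.1 ≫ g.1, by
    rw [CategoryTheory.Functor.whiskerLeft_comp, f.2, g.2, eqToHom_trans]⟩
  id_comp f := Subtype.ext (Category.id_comp _)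
  comp_id f := Subtype.ext (Category.comp_id _)
  assoc f g h := Subtype.ext (Category.assoc _ _ _)

/-- The functor `St : Auto(L) ⥤ C` evaluating an automaton at the object `center`. -/
def St (A : Type) {C : Type u} [Category.{v} C] (L : OA A ⥤ C) : Auto A L ⥤ C where
  obj M := M.1.obj (IA.c A)
  map f := f.1.app (IA.c A)
  map_id _ := rfl
  map_comp _ _ := rfl

/-- The underlying natural transformation of a morphism in `Auto(L)`. -/
def Auto.nat {A : Type} {C : Type u} [Category.{v} C] {L : OA A ⥤ C} {M N : Auto A L}
    (α : M ⟶ N) : M.1 ⟶ N.1 :=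
  (show { β : M.1 ⟶ N.1 //
      CategoryTheory.Functor.whiskerLeft (OA.inc A) β = eqToHom (M.2.trans N.2.symm) } from α).1

/-- Constructor for objects of `Auto(L)`. -/
def Auto.mk {A : Type} {C : Type u} [Category.{v} C] {L : OA A ⥤ C}
    (M : IA A ⥤ C) (h : Accepts M L) : Auto A L := ⟨M, h⟩

/-! ### The transducer monad `T X = B* × X + 1` and its Kleisli category -/

/-- The monad `T X = B* × X + 1` (implemented as `Option (List B × X)`,
with `none` playing the role of `⊥ ∈ 1`). -/
def TM (B : Type) (X : Type) : Type := Option (List B × X)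

namespace TM

variable {B : Type}

/-- `⊥` : the element of `1` in `T X = B* × X + 1`. -/
def bot {X : Type} : TM B X := (none : Option (List B × X))

/-- `(w, x)` as an element of `T X`. -/
def el {X : Type} (w : List B) (x : X) : TM B X := (some (w, x) : Option (List B × X))

/-- The unit of the monad: `x ↦ (ε, x)`. -/
def unit {X : Type} (x : X) : TM B X := el [] x

/-- The bind operation of the monad, corresponding to the multiplication
`(w, (u, x)) ↦ (wu, x)`, everything else going to `⊥`. -/
def bindT {X Y : Type} (t : TM B X) (f : X → TM B Y) : TM B Y :=
  Option.bind (t : Option (List B × X)) fun p =>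
    Option.map (fun q => (p.1 ++ q.1, q.2)) (f p.2 : Option (List B × Y))

instance : Monad (TM B) where
  pure := unit
  bind := bindT

instance : LawfulMonad (TM B) := by
  apply LawfulMonad.mk' (m := TM B)
  · intro α t
    show bindT t (fun x => unit x) = t
    rcases (t : Option (List B × α)) with _ | ⟨w, x⟩
    · rfl
    · simp [bindT, unit, el] <;> rfl
  · intro α β x f
    show bindT (unit x) f = f x
    rcases hf : (f x : Option (List B × β)) with _ | ⟨u, y⟩ <;>
      simp [bindT, unit, el, hf] <;> rfl
  · intro α β γ t f g
    show bindT (bindT t f) g = bindT t fun x => bindT (f x) g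
    rcases (t : Option (List B × α)) with _ | ⟨w, x⟩
    · rfl
    · rcases hf : (f x : Option (List B × β)) with _ | ⟨u, y⟩
      · simp [bindT, hf] <;> rfl
      · rcases hg : (g y : Option (List B × γ)) with _ | ⟨v, z⟩ <;>
          simp [bindT, hf, hg] <;> rfl

end TM

/-- The Kleisli category `Kl(T)` of the monad `T X = B* × X + 1`. -/
abbrev KlT (B : Type) := CategoryTheory.KleisliCat (TM B)

/-- The projection `π₁(f) : X → B* + 1` of a Kleisli morphism `f : X ⇸ Y`. -/
def pi1 {B X Y : Type} (f : X → TM B Y) : X → Option (List B) :=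
  fun x => Option.map Prod.fst (f x : Option (List B × Y))

/-- The projection `π₂(f) : X → Y + 1` of a Kleisli morphism `f : X ⇸ Y`. -/
def pi2 {B X Y : Type} (f : X → TM B Y) : X → Option Y :=
  fun x => Option.map Prod.snd (f x : Option (List B × Y))

/-- The class `E_Kl` of Kleisli morphisms `e` with `π₂(e)` surjective onto `Y`. -/
def EKl {B : Type} {X Y : KlT B} (f : X ⟶ Y) : Prop :=
  ∀ y : Y, ∃ x : X, pi2 f x = some y

/-- The class `M_Kl` of Kleisli morphisms `m` with `π₂(m)` injective and `π₁(m)`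
constantly `ε`. -/
def MKl {B : Type} {X Y : KlT B} (f : X ⟶ Y) : Prop :=
  Function.Injective (pi2 f) ∧ ∀ x : X, pi1 f x = some ([] : List B)

/-- The `(Kl(T), 1, 1)`-language associated with a partial function `L : A* ⇀ B*`
(represented as `L : A* → Option B*`): it sends `▷w◁` to the Kleisli morphism `1 ⇸ 1`
given by `(L(w), 0)` when `L(w)` is defined and `⊥` otherwise. -/
def LKl (A B : Type) (L : List A → Option (List B)) : OA A ⥤ KlT B :=
  mkLang (CategoryTheory.KleisliCat.mk (TM B) PUnit) (CategoryTheory.KleisliCat.mk (TM B) PUnit)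
    (fun w => fun _ : PUnit => ((L w).map (fun v => (v, PUnit.unit)) : TM B PUnit))

/-- The initial `Kl(T)`-automaton for a partial function `L : A* ⇀ B*`, defined on the
generating graph: states `A*`, `▷` sends `0` to `(ε, ε)`, a letter `a` sends `w` to
`(ε, wa)`, and `◁` sends `w` to `(L(w), 0)` when defined and to `⊥` otherwise. -/
def AinitKlPre (A B : Type) (L : List A → Option (List B)) : WObj A ⥤q KlT B where
  obj X :=
    match X with
    | WObj.left => CategoryTheory.KleisliCat.mk (TM B) PUnit
    | WObj.center => CategoryTheory.KleisliCat.mk (TM B) (List A)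
    | WObj.right => CategoryTheory.KleisliCat.mk (TM B) PUnit
  map e :=
    match e with
    | WEdge.tri => fun _ : PUnit => TM.el ([] : List B) ([] : List A)
    | WEdge.letter a => fun w : List A => TM.el ([] : List B) (w ++ [a])
    | WEdge.tril => fun w : List A => ((L w).map (fun v => (v, PUnit.unit)) : TM B PUnit)

/-- The corresponding functor `I_A ⥤ Kl(T)`. -/
def AinitKl (A B : Type) (L : List A → Option (List B)) : IA A ⥤ KlT B :=
  Paths.lift (AinitKlPre A B L)


/-! ### Auxiliary lemmas -/

section Aux

theorem bindT_el_nil {B X Y : Type} (x : X) (f : X → TM B Y) :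
    TM.bindT (TM.el [] x) f = f x := by
  unfold TM.bindT TM.el
  rcases h : (f x : Option (List B × Y)) with _ | ⟨u, y⟩ <;> simp [h] <;> rfl

theorem kl_comp_apply {B : Type} {X Y Z : KlT B} (f : X ⟶ Y) (g : Y ⟶ Z) (x : X) :
    (f ≫ g) x = TM.bindT (f x) g := rfl

theorem kl_eqToHom {B : Type} {X Y : KlT B} (h : X = Y) :
    eqToHom h = fun x => TM.el ([] : List B) (cast h x) := by
  subst h; rfl

theorem toWord_nil {A : Type} {X : WObj A} :
    toWord (Quiver.Path.nil : Quiver.Path X X) = [] := by simp [toWord]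

theorem toWord_cons_letter {A : Type} {X : WObj A} (p : Quiver.Path X WObj.center) (a : A) :
    toWord (p.cons (WEdge.letter a)) = toWord p ++ [a] := by simp [toWord]

theorem toWord_cons_tri {A : Type} {X : WObj A} (p : Quiver.Path X WObj.left) :
    toWord (p.cons WEdge.tri) = toWord p := by simp [toWord]

theorem toWord_cons_tril {A : Type} {X : WObj A} (p : Quiver.Path X WObj.center) :
    toWord (p.cons WEdge.tril) = toWord p := by simp [toWord]

theorem toWord_comp {A : Type} {X Y Z : WObj A} (p : Quiver.Path X Y) (q : Quiver.Path Y Z) :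
    toWord (p.comp q) = toWord p ++ toWord q := by
  induction q with
  | nil => rw [Quiver.Path.comp_nil, toWord_nil, List.append_nil]
  | cons q e ih =>
      rw [Quiver.Path.comp_cons]
      change WEdge _ _ at e
      cases e <;>
        simp [toWord_cons_letter, toWord_cons_tri, toWord_cons_tril, ih]

theorem toWord_pathCC {A : Type} (w : List A) : toWord (pathCC (A := A) w) = w := by
  induction w with
  | nil => exact toWord_nil
  | cons a w ih =>
      show toWord ((Quiver.Hom.toPath (WEdge.letter a)).comp (pathCC w)) = a :: w
      erw [toWord_comp, ih]
      show toWord (Quiver.Path.nil.cons (WEdge.letter a)) ++ w = a :: w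
      erw [toWord_cons_letter, toWord_nil]
      rfl

theorem toWord_pathLR {A : Type} (w : List A) : toWord (pathLR (A := A) w) = w := by
  show toWord ((IA.tri A).comp ((pathCC w).comp (IA.tril A))) = w
  erw [toWord_comp, toWord_comp, toWord_pathCC]
  show toWord (Quiver.Path.nil.cons WEdge.tri) ++ (w ++ toWord (Quiver.Path.nil.cons WEdge.tril)) = w
  rw [toWord_cons_tri, toWord_cons_tril]
  simp [toWord_nil]

theorem pathCC_append {A : Type} (u v : List A) :
    pathCC (u ++ v) = (pathCC u ≫ pathCC v : (IA.c A) ⟶ (IA.c A)) := by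
  induction u with
  | nil =>
      show pathCC v = Quiver.Path.comp Quiver.Path.nil (pathCC v)
      erw [Quiver.Path.nil_comp]
  | cons a u ih =>
      show (Quiver.Hom.toPath (WEdge.letter a)).comp (pathCC (u ++ v)) = _
      rw [ih]
      exact (Quiver.Path.comp_assoc _ _ _).symm

/-- Joint claim about the values of `AinitKl` on paths out of `left`. -/
def AinitClaim (A B : Type) (L : List A → Option (List B)) :
    ∀ Z : WObj A, Quiver.Path (WObj.left : WObj A) Z → Prop
  | WObj.left => fun p => p = Quiver.Path.nil
  | WObj.center => fun p =>
      (AinitKl A B L).map (p : (IA.l A) ⟶ (IA.c A)) =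
        fun _ => TM.el ([] : List B) (toWord p)
  | WObj.right => fun p =>
      (AinitKl A B L).map (p : (IA.l A) ⟶ (IA.r A)) =
        fun _ => ((L (toWord p)).map (fun v => (v, PUnit.unit)) : TM B PUnit)

theorem AinitClaim_all (A B : Type) (L : List A → Option (List B)) :
    ∀ {Z : WObj A} (p : Quiver.Path (WObj.left : WObj A) Z), AinitClaim A B L Z p := by
  intro Z p
  induction p with
  | nil => rfl
  | cons q e ih =>
      change WEdge _ _ at e
      cases e with
      | tri =>
          have hq : q = Quiver.Path.nil := ih
          subst hq
          show (Paths.lift (AinitKlPre A B L)).map (Quiver.Path.nil.cons WEdge.tri) = _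
          rw [Paths.lift_cons]
          funext x
          erw [kl_comp_apply]
          show TM.bindT (TM.el [] PUnit.unit) _ = _
          erw [bindT_el_nil]
          show TM.el [] ([] : List A) = _
          rw [toWord_cons_tri, toWord_nil]
      | letter a =>
          have ihq : (Paths.lift (AinitKlPre A B L)).map (q : (IA.l A) ⟶ (IA.c A)) =
              fun _ => TM.el ([] : List B) (toWord q) := ih
          show (Paths.lift (AinitKlPre A B L)).map (q.cons (WEdge.letter a)) = _
          rw [Paths.lift_cons, ihq]
          funext x
          erw [kl_comp_apply, bindT_el_nil]
          show TM.el [] (toWord q ++ [a]) = _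
          rw [toWord_cons_letter]
      | tril =>
          have ihq : (Paths.lift (AinitKlPre A B L)).map (q : (IA.l A) ⟶ (IA.c A)) =
              fun _ => TM.el ([] : List B) (toWord q) := ih
          show (Paths.lift (AinitKlPre A B L)).map (q.cons WEdge.tril) = _
          rw [Paths.lift_cons, ihq]
          funext x
          erw [kl_comp_apply, bindT_el_nil]
          show ((L (toWord q)).map (fun v => (v, PUnit.unit)) : TM B PUnit) = _
          rw [toWord_cons_tril]

theorem Ainit_map_lc (A B : Type) (L : List A → Option (List B))
    (p : Quiver.Path (WObj.left : WObj A) WObj.center) :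
    (AinitKl A B L).map (p : (IA.l A) ⟶ (IA.c A)) =
      fun _ => TM.el ([] : List B) (toWord p) :=
  AinitClaim_all A B L p

theorem Ainit_map_lr (A B : Type) (L : List A → Option (List B))
    (p : Quiver.Path (WObj.left : WObj A) WObj.right) :
    (AinitKl A B L).map (p : (IA.l A) ⟶ (IA.r A)) =
      fun _ => ((L (toWord p)).map (fun v => (v, PUnit.unit)) : TM B PUnit) :=
  AinitClaim_all A B L p

theorem AinitKl_accepts (A B : Type) (L : List A → Option (List B)) :
    Accepts (AinitKl A B L) (LKl A B L) := by
  apply CategoryTheory.Functor.ext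
  case h_obj =>
    rintro ⟨(_ | _ | _), hX⟩
    · rfl
    · exact absurd rfl hX
    · rfl
  case h_map =>
    rintro ⟨(_ | _ | _), hX⟩ ⟨(_ | _ | _), hY⟩ ⟨p⟩ <;>
      first
        | exact absurd rfl hX
        | exact absurd rfl hY
        | exact (path_rl_false p).elim
        | (erw [eqToHom_refl, Category.id_comp, Category.comp_id]
           first
             | (have hp := path_ll_nil p
                subst hp
                exact ((AinitKl A B L).map_id _).trans rfl)
             | (have hp := path_rr_nil p
                subst hp
                exact ((AinitKl A B L).map_id _).trans rfl)
             | exact Ainit_map_lr A B L p)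

section Init

variable {A B : Type} {L : List A → Option (List B)}

/-- The type equality at `left` coming from acceptance. -/
def eLM (M : Auto A (LKl A B L)) :
    (AinitKl A B L).obj (WObj.left : IA A) = M.1.obj (WObj.left : IA A) :=
  (Functor.congr_obj M.2 (OA.l A)).symm

/-- The type equality at `right` coming from acceptance. -/
def eRM (M : Auto A (LKl A B L)) :
    (AinitKl A B L).obj (WObj.right : IA A) = M.1.obj (WObj.right : IA A) :=
  (Functor.congr_obj M.2 (OA.r A)).symm

/-- The component at `center` of the canonical morphism out of `𝒜_init`. -/
def appCM (M : Auto A (LKl A B L)) :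
    (AinitKl A B L).obj (WObj.center : IA A) ⟶ M.1.obj (WObj.center : IA A) :=
  fun w : List A => (eqToHom (eLM M) ≫ M.1.map (IA.tri A ≫ pathCC w)) PUnit.unit

/-- All components of the canonical morphism out of `𝒜_init`. -/
def appM (M : Auto A (LKl A B L)) (X : WObj A) :
    (AinitKl A B L).obj (X : IA A) ⟶ M.1.obj (X : IA A) :=
  match X with
  | WObj.left => eqToHom (eLM M)
  | WObj.center => appCM M
  | WObj.right => eqToHom (eRM M)

theorem Ainit_map_toPath {X Y : WObj A} (e : WEdge X Y) :
    (AinitKl A B L).map (Quiver.Hom.toPath e) = (AinitKlPre A B L).map e :=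
  Paths.lift_toPath _ _

theorem squareM (M : Auto A (LKl A B L)) {X Y : WObj A} (e : WEdge X Y) :
    (AinitKl A B L).map (Quiver.Hom.toPath e) ≫ appM M Y
      = appM M X ≫ M.1.map (Quiver.Hom.toPath e) := by
  rw [Ainit_map_toPath]
  cases e with
  | tri =>
      funext x
      cases x
      erw [kl_comp_apply]
      show TM.bindT (TM.el [] ([] : List A)) (appCM M) = _
      erw [bindT_el_nil]
      rfl
  | letter a =>
      funext w
      erw [kl_comp_apply]
      show TM.bindT (TM.el ([] : List B) ((show List A from w) ++ [a])) (appCM M) = _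
      erw [bindT_el_nil]
      show (eqToHom (eLM M) ≫ M.1.map (IA.tri A ≫ pathCC ((show List A from w) ++ [a]))) PUnit.unit
        = ((eqToHom (eLM M) ≫ M.1.map (IA.tri A ≫ pathCC w))
            ≫ M.1.map (Quiver.Hom.toPath (WEdge.letter a))) PUnit.unit
      refine congrFun ?_ PUnit.unit
      rw [pathCC_append,
        show (pathCC [a] : (IA.c A) ⟶ (IA.c A)) = Quiver.Hom.toPath (WEdge.letter a) from rfl]
      erw [Category.assoc, ← Functor.map_comp]
      rfl
  | tril =>
      funext w
      erw [kl_comp_apply]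
      show TM.bindT (((L w).map (fun v => (v, PUnit.unit)) : TM B PUnit)) (eqToHom (eRM M))
        = ((eqToHom (eLM M) ≫ M.1.map (IA.tri A ≫ pathCC w))
            ≫ M.1.map (Quiver.Hom.toPath WEdge.tril)) PUnit.unit
      have h1 : (eqToHom (eLM M) ≫ M.1.map (IA.tri A ≫ pathCC w))
            ≫ M.1.map (Quiver.Hom.toPath WEdge.tril)
          = eqToHom (eLM M) ≫ M.1.map (pathLR w) := by
        simp only [pathLR, IA.tril, Category.assoc, ← Functor.map_comp]
        erw [← Functor.map_comp, Category.assoc]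
        rfl
      rw [h1]
      have h2 := Functor.congr_hom M.2 (OA.word w)
      have h3 : M.1.map (pathLR (A := A) w)
          = eqToHom (Functor.congr_obj M.2 (OA.l A))
            ≫ (LKl A B L).map (OA.word w)
            ≫ eqToHom (Functor.congr_obj M.2 (OA.r A)).symm := h2
      erw [h3]
      have h4 : ((LKl A B L).map (OA.word w) : PUnit → TM B PUnit)
          = fun _ => ((L w).map (fun v => (v, PUnit.unit)) : TM B PUnit) := by
        funext x
        show ((L (toWord (pathLR w))).map (fun v => (v, PUnit.unit)) : TM B PUnit) = _
        erw [toWord_pathLR]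
      erw [h4]
      erw [kl_eqToHom (eLM M), kl_eqToHom (Functor.congr_obj M.2 (OA.l A)),
        kl_eqToHom (Functor.congr_obj M.2 (OA.r A)).symm]
      rcases L w with _ | v <;> rfl

theorem natM (M : Auto A (LKl A B L)) {X Y : IA A} (p : X ⟶ Y) :
    (AinitKl A B L).map p ≫ appM M Y = appM M X ≫ M.1.map p := by
  change @Quiver.Path (WObj A) _ X Y at p
  induction p with
  | nil =>
      erw [show (Quiver.Path.nil : X ⟶ X) = 𝟙 X from rfl, CategoryTheory.Functor.map_id,
        CategoryTheory.Functor.map_id, Category.id_comp, Category.comp_id]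
  | cons q e ih =>
      rename_i Y' Z'
      have hrw : @Quiver.Path.cons (WObj A) (instQuiverWObj A) X Y' Z' q e
          = (q ≫ (@Quiver.Hom.toPath (WObj A) (instQuiverWObj A) Y' Z' e) : X ⟶ Z') := rfl
      erw [hrw, CategoryTheory.Functor.map_comp, CategoryTheory.Functor.map_comp,
        Category.assoc, squareM M e, ← Category.assoc, ih, Category.assoc]

/-- The canonical natural transformation out of `𝒜_init`. -/
def natTransM (M : Auto A (LKl A B L)) : AinitKl A B L ⟶ M.1 where
  app X := appM M X
  naturality _ _ p := natM M p

theorem whiskerM (M : Auto A (LKl A B L)) :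
    CategoryTheory.Functor.whiskerLeft (OA.inc A) (natTransM M)
      = eqToHom (((AinitKl_accepts A B L)).trans M.2.symm) := by
  apply NatTrans.ext
  funext X
  rcases X with ⟨(_ | _ | _), hX⟩
  · show appM M WObj.left = _
    erw [eqToHom_app]
    rfl
  · exact absurd rfl hX
  · show appM M WObj.right = _
    erw [eqToHom_app]
    rfl

/-- The canonical morphism in `Auto (LKl A B L)` out of `𝒜_init`. -/
def homM (M : Auto A (LKl A B L)) :
    Auto.mk (AinitKl A B L) (AinitKl_accepts A B L) ⟶ M :=
  ⟨natTransM M, whiskerM M⟩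

theorem uniqM (M : Auto A (LKl A B L))
    (m : Auto.mk (AinitKl A B L) (AinitKl_accepts A B L) ⟶ M) : m = homM M := by
  apply Subtype.ext
  have hm := m.2
  have hleft : (Auto.nat m).app (WObj.left : IA A) = eqToHom (eLM M) := by
    have := congrArg (fun t => NatTrans.app t (OA.l A)) hm
    simp only [eqToHom_app] at this
    exact this
  apply NatTrans.ext
  funext X
  rcases X with _ | _ | _
  · exact hleft
  · have key : ∀ v : List A, (Auto.nat m).app (IA.c A) v = appCM M v := by
      intro v
      have hAmap : (AinitKl A B L).map (IA.tri A ≫ pathCC v : (IA.l A) ⟶ (IA.c A))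
          = fun _ => TM.el ([] : List B) v := by
        erw [Ainit_map_lc]
        have hv : toWord (IA.tri A ≫ pathCC v : (IA.l A) ⟶ (IA.c A)) = v := by
          show toWord ((IA.tri A).comp (pathCC v)) = v
          erw [toWord_comp, toWord_pathCC]
          show toWord (Quiver.Path.nil.cons WEdge.tri) ++ v = v
          rw [toWord_cons_tri, toWord_nil]
          rfl
        erw [hv]
        rfl
      have hnat : (AinitKl A B L).map (IA.tri A ≫ pathCC v : (IA.l A) ⟶ (IA.c A))
            ≫ (Auto.nat m).app (IA.c A)
          = (Auto.nat m).app (IA.l A)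
            ≫ M.1.map (IA.tri A ≫ pathCC v : (IA.l A) ⟶ (IA.c A)) :=
        (Auto.nat m).naturality _
      rw [hAmap] at hnat
      rw [show (Auto.nat m).app (IA.l A) = eqToHom (eLM M) from hleft] at hnat
      have h5 := congrFun hnat PUnit.unit
      erw [kl_comp_apply, bindT_el_nil] at h5
      exact h5
    funext w
    exact key (show List A from w)
  · have := congrArg (fun t => NatTrans.app t (OA.r A)) hm
    simp only [eqToHom_app] at this
    exact this
end Init

/-- The automaton `𝒜_init` accepts `L_Kl` and is an initial object of `Auto(L_Kl)`. -/
theorem AinitKl_accepts_and_initial (A B : Type) (L : List A → Option (List B)) :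
    ∃ h : Accepts (AinitKl A B L) (LKl A B L),
      Nonempty (IsInitial (Auto.mk (AinitKl A B L) h)) :=
  ⟨AinitKl_accepts A B L,
    ⟨IsInitial.ofUniqueHom (fun M => homM M) (fun M m => uniqM M m)⟩⟩
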